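/- Let ω be a primitive cube root of unity in ℂ and let a, b be nonzero complex numbers with |ab| < 1. Then f(ωa, ωb) = f(a⁶b³, a³b⁶) + ω·a·f(a⁹b⁶, b³) + ω·a³b·f(a¹²b⁹, a⁻³), where a⁻³ denotes the integer power (−3) of the nonzero complex number a. -/

import Mathlib

open Filter Topology

private lemma summable_ratio {f : ℕ → ℂ} {v : ℕ → ℂ}
    (hne : ∀ k, f k ≠ 0) (hrec : ∀ k, f (k+1) = v k * f k)
    (hv : Tendsto (fun k => ‖v k‖) atTop (𝓝 0)) : Summable f := by
  refine summable_of_ratio_test_tendsto_lt_one (l := 0) zero_lt_one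
    (Eventually.of_forall hne) ?_
  have h : ∀ k, ‖f (k+1)‖ / ‖f k‖ = ‖v k‖ := fun k => by
    rw [hrec, norm_mul, mul_div_assoc, div_self (norm_ne_zero_iff.mpr (hne k)), mul_one]
  exact Tendsto.congr (fun k => (h k).symm) hv

private lemma summable_theta_term (a b : ℂ) (ha : a ≠ 0) (hb : b ≠ 0)
    (hab : ‖a * b‖ < 1) :
    Summable (fun n : ℤ => a ^ (n * (n + 1) / 2) * b ^ (n * (n - 1) / 2)) := by
  have hab0 : a * b ≠ 0 := mul_ne_zero ha hb
  have key : ∀ n : ℤ, a ^ (n * (n + 1) / 2) * b ^ (n * (n - 1) / 2)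
      = (a*b) ^ (n * (n - 1) / 2) * a ^ n := by
    intro n
    obtain ⟨j, hj⟩ : Even (n * (n-1)) := by
      simpa [mul_comm] using Int.even_mul_succ_self (n-1)
    have h1 : n * (n + 1) = (j + n) + (j + n) := by linear_combination hj
    have h2 : n * (n + 1) / 2 = j + n := by rw [h1]; omega
    have h3 : n * (n - 1) / 2 = j := by rw [hj]; omega
    rw [h2, h3, mul_zpow, zpow_add₀ ha]; ring
  rw [summable_congr key]
  have hr : (0:ℝ) ≤ ‖a*b‖ := norm_nonneg _
  apply Summable.of_nat_of_neg
  · apply summable_ratio (v := fun k : ℕ => (a*b)^(k:ℤ) * a)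
    · exact fun k => mul_ne_zero (zpow_ne_zero _ hab0) (zpow_ne_zero _ ha)
    · intro k
      push_cast
      set n := (k:ℤ)
      obtain ⟨j, hj⟩ : Even (n * (n-1)) := by
        simpa [mul_comm] using Int.even_mul_succ_self (n-1)
      have h1 : (n+1) * ((n+1) - 1) = (j+n) + (j+n) := by linear_combination hj
      have h2 : (n+1) * ((n+1) - 1) / 2 = j + n := by rw [h1]; omega
      have h3 : n * (n - 1) / 2 = j := by rw [hj]; omega
      rw [h2, h3, zpow_add₀ hab0, zpow_add₀ ha, zpow_one]; ring
    · have : ∀ k : ℕ, ‖(a*b)^(k:ℤ) * a‖ = ‖a*b‖^k * ‖a‖ := by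
        intro k
        rw [norm_mul, zpow_natCast, norm_pow]
      rw [funext this]
      simpa using (tendsto_pow_atTop_nhds_zero_of_lt_one hr hab).mul_const ‖a‖
  · apply summable_ratio (v := fun k : ℕ => (a*b)^((k:ℤ)+1) * a⁻¹)
    · exact fun k => mul_ne_zero (zpow_ne_zero _ hab0) (zpow_ne_zero _ ha)
    · intro k
      push_cast
      set n := (k:ℤ)
      obtain ⟨j, hj⟩ : Even ((-n) * ((-n)-1)) := by
        simpa [mul_comm] using Int.even_mul_succ_self (-n-1)
      have h1 : (-(n+1)) * ((-(n+1)) - 1) = (j+n+1) + (j+n+1) := by linear_combination hj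
      have h2 : (-(n+1)) * ((-(n+1)) - 1) / 2 = j + n + 1 := by rw [h1]; omega
      have h3 : (-n) * ((-n) - 1) / 2 = j := by rw [hj]; omega
      rw [h2, h3, zpow_add₀ hab0, zpow_add₀ hab0, zpow_neg, zpow_add₀ ha, zpow_one]
      field_simp
      rw [zpow_add₀ hab0, zpow_one]
      ring_nf; rw [mul_assoc (a * b * (a * b) ^ n), ← zpow_add₀ ha, add_neg_cancel, zpow_zero, mul_one]
    · have : ∀ k : ℕ, ‖(a*b)^((k:ℤ)+1) * a⁻¹‖
          = ‖a*b‖^(k+1) * ‖a‖⁻¹ := by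
        intro k
        rw [norm_mul, norm_inv, show ((k:ℤ)+1) = ((k+1:ℕ):ℤ) by push_cast; ring,
          zpow_natCast, norm_pow]
      rw [funext this]
      have := ((tendsto_pow_atTop_nhds_zero_of_lt_one hr hab).comp
        (tendsto_add_atTop_nat 1)).mul_const ‖a‖⁻¹
      simpa [Function.comp] using this

private lemma zpow_merge (ω a b : ℂ) (hω0 : ω ≠ 0) (s t : ℤ) :
    (ω*a)^s * (ω*b)^t = ω^(s+t) * (a^s * b^t) := by
  rw [mul_zpow, mul_zpow, zpow_add₀ hω0]; ring

private lemma zpow_split (a b : ℂ) (ha : a ≠ 0) (hb : b ≠ 0) (c d e f u v : ℤ) :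
    (a^c*b^d)^u * (a^e*b^f)^v = a^(c*u+e*v) * b^(d*u+f*v) := by
  rw [mul_zpow, mul_zpow, ← zpow_mul, ← zpow_mul, ← zpow_mul, ← zpow_mul,
    zpow_add₀ ha, zpow_add₀ hb]; ring

private def modEquiv : Fin 3 × ℤ ≃ ℤ where
  toFun p := 3 * p.2 + (p.1.val : ℤ)
  invFun n := (⟨(n % 3).toNat, by omega⟩, n / 3)
  left_inv := by
    rintro ⟨r, m⟩
    have hr := r.isLt
    refine Prod.ext (Fin.ext ?_) ?_
    · show ((3 * m + (r.val : ℤ)) % 3).toNat = r.val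
      omega
    · show (3 * m + (r.val : ℤ)) / 3 = m
      omega
  right_inv := by
    intro n
    show 3 * (n / 3) + (((n % 3).toNat : ℕ) : ℤ) = n
    omega

private lemma modEquiv_apply (r : Fin 3) (m : ℤ) : modEquiv (r, m) = 3*m + (r.val : ℤ) := rfl

/-- Ramanujan's theta function `f(a,b) = ∑_{n ∈ ℤ} a^(n(n+1)/2) * b^(n(n-1)/2)`. -/
noncomputable def ramanujanTheta (a b : ℂ) : ℂ :=
  ∑' n : ℤ, a ^ (n * (n + 1) / 2) * b ^ (n * (n - 1) / 2)

set_option maxHeartbeats 1600000 in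
theorem theta_cubic_transform_explicit (ω a b : ℂ) (hω : IsPrimitiveRoot ω 3)
    (ha : a ≠ 0) (hb : b ≠ 0) (hab : ‖a * b‖ < 1) :
    ramanujanTheta (ω * a) (ω * b) =
      ramanujanTheta (a ^ 6 * b ^ 3) (a ^ 3 * b ^ 6) +
        ω * a * ramanujanTheta (a ^ 9 * b ^ 6) (b ^ 3) +
        ω * (a ^ 3 * b) * ramanujanTheta (a ^ 12 * b ^ 9) (a ^ (-3 : ℤ)) := by
  have hω0 : ω ≠ 0 := hω.ne_zero (by norm_num)
  have hω3 : ω ^ (3:ℕ) = 1 := hω.pow_eq_one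
  have hw3 : ∀ z : ℤ, ω ^ (3*z) = 1 := fun z => by
    rw [zpow_mul, show (3:ℤ) = ((3:ℕ):ℤ) by norm_num, zpow_natCast, hω3, one_zpow]
  have habs : ‖ω‖ = 1 := by
    have h : ‖ω‖ ^ (3:ℕ) = 1 := by rw [← norm_pow, hω3, norm_one]
    nlinarith [norm_nonneg ω, sq_nonneg (‖ω‖ - 1), sq_nonneg (‖ω‖ + 1)]
  have hωa : ω * a ≠ 0 := mul_ne_zero hω0 ha
  have hωb : ω * b ≠ 0 := mul_ne_zero hω0 hb
  have habL : ‖(ω*a) * (ω*b)‖ < 1 := by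
    have h : (ω*a)*(ω*b) = (ω*ω)*(a*b) := by ring
    rw [h, norm_mul, norm_mul, habs]
    simpa using hab
  set F : ℤ → ℂ := fun n => (ω*a) ^ (n * (n + 1) / 2) * (ω*b) ^ (n * (n - 1) / 2) with hF
  have hsum : Summable F := summable_theta_term _ _ hωa hωb habL
  have hsum' : Summable (fun p : Fin 3 × ℤ => F (modEquiv p)) := modEquiv.summable_iff.mpr hsum
  have hfib : ∀ r : Fin 3, Summable (fun c : ℤ => F (modEquiv (r, c))) := fun r =>
    hsum'.comp_injective (fun c₁ c₂ h => by simpa using h)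
  have hm0 : ∀ m : ℤ, modEquiv (0, m) = 3*m := by intro m; simp [modEquiv_apply]
  have hm1 : ∀ m : ℤ, modEquiv (1, m) = 3*m+1 := by intro m; simp [modEquiv_apply]
  have hm2 : ∀ m : ℤ, modEquiv (2, m) = 3*m+2 := by
    intro m; rw [modEquiv_apply, show (((2:Fin 3).val : ℕ) : ℤ) = 2 by decide]
  have e0 : ∑' (c : ℤ), F (modEquiv (0, c))
      = ramanujanTheta (a ^ 6 * b ^ 3) (a ^ 3 * b ^ 6) := by
    rw [ramanujanTheta]
    apply tsum_congr
    intro m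
    rw [hm0 m]
    simp only [hF]
    obtain ⟨k, hk⟩ : Even (m*(m+1)) := Int.even_mul_succ_self m
    have h1 : m*(m+1)/2 = k := by rw [hk]; omega
    have h2 : m*(m-1)/2 = k - m := by
      rw [show m*(m-1) = (k-m)+(k-m) by linear_combination hk]; omega
    have h3 : (3*m)*(3*m+1)/2 = 9*k-3*m := by
      rw [show (3*m)*(3*m+1) = (9*k-3*m)+(9*k-3*m) by linear_combination 9*hk]; omega
    have h4 : (3*m)*(3*m-1)/2 = 9*k-6*m := by
      rw [show (3*m)*(3*m-1) = (9*k-6*m)+(9*k-6*m) by linear_combination 9*hk]; omega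
    rw [h1, h2, h3, h4,
      show (a:ℂ)^(6:ℕ)*b^(3:ℕ) = a^(6:ℤ)*b^(3:ℤ) by norm_cast,
      show (a:ℂ)^(3:ℕ)*b^(6:ℕ) = a^(3:ℤ)*b^(6:ℤ) by norm_cast,
      zpow_split a b ha hb, zpow_merge ω a b hω0,
      show (9*k-3*m)+(9*k-6*m) = 3*(6*k-3*m) by ring, hw3, one_mul,
      show (9:ℤ)*k-3*m = 6*k+3*(k-m) by ring,
      show (9:ℤ)*k-6*m = 3*k+6*(k-m) by ring]
  have e1 : ∑' (c : ℤ), F (modEquiv (1, c))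
      = ω * a * ramanujanTheta (a ^ 9 * b ^ 6) (b ^ 3) := by
    rw [ramanujanTheta, ← tsum_mul_left]
    apply tsum_congr
    intro m
    rw [hm1 m]
    simp only [hF]
    obtain ⟨k, hk⟩ : Even (m*(m+1)) := Int.even_mul_succ_self m
    have h1 : m*(m+1)/2 = k := by rw [hk]; omega
    have h2 : m*(m-1)/2 = k - m := by
      rw [show m*(m-1) = (k-m)+(k-m) by linear_combination hk]; omega
    have h3 : (3*m+1)*(3*m+1+1)/2 = 9*k+1 := by
      rw [show (3*m+1)*(3*m+1+1) = (9*k+1)+(9*k+1) by linear_combination 9*hk]; omega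
    have h4 : (3*m+1)*(3*m+1-1)/2 = 9*k-3*m := by
      rw [show (3*m+1)*(3*m+1-1) = (9*k-3*m)+(9*k-3*m) by linear_combination 9*hk]; omega
    rw [h1, h2, h3, h4,
      show (a:ℂ)^(9:ℕ)*b^(6:ℕ) = a^(9:ℤ)*b^(6:ℤ) by norm_cast,
      show (b:ℂ)^(3:ℕ) = a^(0:ℤ)*b^(3:ℤ) by rw [zpow_zero, one_mul]; norm_cast,
      zpow_split a b ha hb, zpow_merge ω a b hω0,
      show (9*k+1)+(9*k-3*m) = 3*(6*k-m)+1 by ring, zpow_add₀ hω0, hw3, zpow_one,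
      show (9:ℤ)*k+1 = (9*k+0*(k-m))+1 by ring, zpow_add₀ ha,
      show (9:ℤ)*k-3*m = 6*k+3*(k-m) by ring]
    simp only [zpow_one]; ring
  have e2 : ∑' (c : ℤ), F (modEquiv (2, c))
      = ω * (a ^ 3 * b) * ramanujanTheta (a ^ 12 * b ^ 9) (a ^ (-3 : ℤ)) := by
    rw [ramanujanTheta, ← tsum_mul_left]
    apply tsum_congr
    intro m
    rw [hm2 m]
    simp only [hF]
    obtain ⟨k, hk⟩ : Even (m*(m+1)) := Int.even_mul_succ_self m
    have h1 : m*(m+1)/2 = k := by rw [hk]; omega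
    have h2 : m*(m-1)/2 = k - m := by
      rw [show m*(m-1) = (k-m)+(k-m) by linear_combination hk]; omega
    have h3 : (3*m+2)*(3*m+2+1)/2 = 9*k+3*m+3 := by
      rw [show (3*m+2)*(3*m+2+1) = (9*k+3*m+3)+(9*k+3*m+3) by linear_combination 9*hk]; omega
    have h4 : (3*m+2)*(3*m+2-1)/2 = 9*k+1 := by
      rw [show (3*m+2)*(3*m+2-1) = (9*k+1)+(9*k+1) by linear_combination 9*hk]; omega
    rw [h1, h2, h3, h4,
      show (a:ℂ)^(12:ℕ)*b^(9:ℕ) = a^(12:ℤ)*b^(9:ℤ) by norm_cast,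
      show (a:ℂ)^(-3:ℤ) = a^(-3:ℤ)*b^(0:ℤ) by rw [zpow_zero, mul_one],
      zpow_split a b ha hb, zpow_merge ω a b hω0,
      show (9*k+3*m+3)+(9*k+1) = 3*(6*k+m+1)+1 by ring, zpow_add₀ hω0, hw3, zpow_one,
      show (9:ℤ)*k+3*m+3 = (12*k+(-3)*(k-m))+3 by ring, zpow_add₀ ha,
      show (9:ℤ)*k+1 = (9*k+0*(k-m))+1 by ring, zpow_add₀ hb,
      show (a:ℂ)^(3:ℤ) = a^(3:ℕ) by norm_cast]
    simp only [zpow_one]; ring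
  calc ramanujanTheta (ω * a) (ω * b)
      = ∑' (r : Fin 3), ∑' (c : ℤ), F (modEquiv (r, c)) := by
        rw [ramanujanTheta, ← modEquiv.tsum_eq F, Summable.tsum_prod' hsum' hfib]
    _ = (∑' (c : ℤ), F (modEquiv (0, c))) + (∑' (c : ℤ), F (modEquiv (1, c)))
          + (∑' (c : ℤ), F (modEquiv (2, c))) := by
        rw [tsum_fintype]; exact Fin.sum_univ_three _
    _ = _ := by rw [e0, e1, e2]
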